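/- Let G be a second countable locally compact abelian group that is compact or discrete, and Λ any lattice in G. Then the line bundle E_{G,Λ} over (G/Λ)×(Ĝ/Λ^⊥) is trivial. In particular, when G is compact, Λ is finite and the map φ([x, ω_k, z]) = ([x], ω_k(x)z) defines a trivialization of E_{G,Λ} restricted to each component (G/Λ)×{[ω_k]}. -/

import Mathlib

/-- The annihilator `Λ^⊥ ⊆ Ĝ` of a subgroup `Λ ⊆ G`. -/
def annih {G : Type*} [CommGroup G] [TopologicalSpace G] [IsTopologicalGroup G]
    (Λ : Subgroup G) : Subgroup (PontryaginDual G) where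
  carrier := {ω | ∀ l ∈ Λ, ω l = 1}
  one_mem' := by intro l _; rfl
  mul_mem' := by
    intro a b ha hb l hl
    have : (a * b) l = a l * b l := rfl
    rw [this, ha l hl, hb l hl, mul_one]
  inv_mem' := by
    intro a ha l hl
    have : (a⁻¹ : PontryaginDual _) l = (a l)⁻¹ := rfl
    rw [this, ha l hl, inv_one]

/-- The relation on `G × Ĝ × ℂ` defining the Heisenberg line bundle `E_{G,Λ}`. -/
def heisRel {G : Type*} [CommGroup G] [TopologicalSpace G] [IsTopologicalGroup G]
    (Λ : Subgroup G) :
    (G × PontryaginDual G × ℂ) → (G × PontryaginDual G × ℂ) → Prop :=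
  fun p q => ∃ (l : Λ) (τ : annih Λ),
    q.1 = p.1 * l ∧ q.2.1 = p.2.1 * (τ : PontryaginDual G) ∧
    q.2.2 = (starRingEnd ℂ) ((p.2.1 (l : G) : ℂ)) * p.2.2

section CircleHelpers

open Complex

private lemma circle_pow_exp (θ : ℝ) : ∀ n : ℕ, Circle.exp θ ^ n = Circle.exp (n * θ)
  | 0 => by simp
  | n + 1 => by
    rw [pow_succ, circle_pow_exp θ n, ← Circle.exp_add]
    push_cast
    ring_nf

private lemma circle_aux_pos (u : Circle) (h : ∀ n : ℕ, 0 < ((u ^ n : Circle) : ℂ).re)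
    (hpos : 0 < Complex.arg (u : ℂ)) : False := by
  set θ := Complex.arg (u : ℂ) with hθdef
  have h1 : |θ| < Real.pi / 2 := by
    have h1' := h 1
    rw [pow_one] at h1'
    exact Complex.abs_arg_lt_pi_div_two_iff.mpr (Or.inl h1')
  have hθlt : θ < Real.pi / 2 := (abs_lt.mp h1).2
  set n : ℕ := ⌈(Real.pi / 2) / θ⌉₊ with hndef
  have hle : Real.pi / 2 ≤ (n : ℝ) * θ := by
    have := Nat.le_ceil ((Real.pi / 2) / θ)
    rw [div_le_iff₀ hpos] at this
    linarith [this]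
  have hlt : (n : ℝ) * θ ≤ Real.pi + Real.pi / 2 := by
    have hc : (n : ℝ) < (Real.pi / 2) / θ + 1 := Nat.ceil_lt_add_one (by positivity)
    have := mul_lt_mul_of_pos_right hc hpos
    rw [add_mul, div_mul_cancel₀ _ (ne_of_gt hpos), one_mul] at this
    linarith [Real.pi_pos]
  have hu : u = Circle.exp θ := (Circle.exp_arg u).symm
  have hre : ((u ^ n : Circle) : ℂ).re = Real.cos ((n : ℝ) * θ) := by
    rw [hu, circle_pow_exp, Circle.coe_exp, Complex.exp_ofReal_mul_I_re]
  have hcos := Real.cos_nonpos_of_pi_div_two_le_of_le hle hlt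
  have := h n
  rw [hre] at this
  linarith

private lemma circle_eq_one (u : Circle) (h : ∀ n : ℕ, 0 < ((u ^ n : Circle) : ℂ).re) :
    u = 1 := by
  rcases lt_trichotomy (Complex.arg (u : ℂ)) 0 with hneg | hzero | hpos
  · exfalso
    apply circle_aux_pos u⁻¹
    · intro n
      have hc : ((u⁻¹ ^ n : Circle) : ℂ) = (starRingEnd ℂ) ((u ^ n : Circle) : ℂ) := by
        rw [inv_pow, Circle.coe_inv_eq_conj]
      rw [hc, Complex.conj_re]
      exact h n
    · have harg : Complex.arg ((u⁻¹ : Circle) : ℂ) = -Complex.arg (u : ℂ) := by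
        rw [Circle.coe_inv_eq_conj, Complex.arg_conj, if_neg]
        intro hpi
        rw [hpi] at hneg
        linarith [Real.pi_pos]
      rw [harg]
      linarith
  · rw [← Circle.exp_arg u, hzero, Circle.exp_zero]
  · exact (circle_aux_pos u h hpos).elim

/-- The Pontryagin dual of a compact group is discrete. -/
private lemma discrete_dual (G : Type*) [CommGroup G] [TopologicalSpace G] [IsTopologicalGroup G]
    [CompactSpace G] : DiscreteTopology (PontryaginDual G) := by
  apply discreteTopology_of_isOpen_singleton_one
  have hV : IsOpen {z : Circle | 0 < (z : ℂ).re} :=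
    isOpen_lt continuous_const (Complex.continuous_re.comp continuous_subtype_val)
  have hopen : IsOpen {f : C(G, Circle) | Set.MapsTo f Set.univ {z : Circle | 0 < (z : ℂ).re}} :=
    ContinuousMap.isOpen_setOf_mapsTo isCompact_univ hV
  have hcont : Continuous fun χ : PontryaginDual G => (χ : ContinuousMonoidHom G Circle).toContinuousMap :=
    (ContinuousMonoidHom.isInducing_toContinuousMap G Circle).continuous
  have heq : ({1} : Set (PontryaginDual G)) =
      (fun χ : PontryaginDual G => (χ : ContinuousMonoidHom G Circle).toContinuousMap) ⁻¹'
        {f : C(G, Circle) | Set.MapsTo f Set.univ {z : Circle | 0 < (z : ℂ).re}} := by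
    ext χ
    simp only [Set.mem_singleton_iff, Set.mem_preimage, Set.mem_setOf_eq]
    constructor
    · rintro rfl x _
      show (0 : ℝ) < (((1 : PontryaginDual G) x : Circle) : ℂ).re
      norm_num [show ((1 : PontryaginDual G) x) = 1 from rfl]
    · intro hχ
      refine DFunLike.ext χ 1 fun x => ?_
      have key : ∀ n : ℕ, 0 < ((χ x ^ n : Circle) : ℂ).re := by
        intro n
        have := hχ (Set.mem_univ (x ^ n))
        simp [map_pow] at this
        exact this
      exact circle_eq_one (χ x) key
  rw [heq]
  exact hopen.preimage hcont

private lemma coe_inv_mul_cancel' (u : Circle) (z : ℂ) :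
    ((u⁻¹ : Circle) : ℂ) * ((u : ℂ) * z) = z := by
  rw [Circle.coe_inv]
  field_simp

private lemma coe_mul_inv_cancel' (u : Circle) (z : ℂ) :
    ((u : ℂ)) * (((u⁻¹ : Circle) : ℂ) * z) = z := by
  rw [Circle.coe_inv]
  field_simp

private lemma coe_mul_conj_cancel' (u v : Circle) (z : ℂ) :
    ((u * v : Circle) : ℂ) * ((starRingEnd ℂ) (v : ℂ) * z) = (u : ℂ) * z := by
  rw [← Circle.coe_inv_eq_conj, Circle.coe_mul, Circle.coe_inv]
  have := Circle.coe_ne_zero v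
  field_simp

end CircleHelpers

section TopHelpers

private lemma continuous_discrete_param {X Y Z : Type*} [TopologicalSpace X] [DiscreteTopology X]
    [TopologicalSpace Y] [TopologicalSpace Z] {g : Y → X} (hg : Continuous g)
    {f : X → Y → Z} (hf : ∀ x, Continuous (f x)) : Continuous fun y => f (g y) y := by
  rw [continuous_iff_continuousAt]
  intro y
  have hmem : g ⁻¹' {g y} ∈ nhds y :=
    hg.continuousAt.preimage_mem_nhds (by rw [nhds_discrete]; exact Filter.mem_pure.mpr rfl)
  refine ContinuousAt.congr ((hf (g y)).continuousAt) ?_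
  filter_upwards [hmem] with y' hy'
  simp only [Set.mem_preimage, Set.mem_singleton_iff] at hy'
  rw [hy']

end TopHelpers

section HeisHelpers

variable {G : Type*} [CommGroup G] [TopologicalSpace G] [IsTopologicalGroup G]

private lemma mem_annih_iff {Λ : Subgroup G} {ω : PontryaginDual G} :
    ω ∈ annih Λ ↔ ∀ l ∈ Λ, ω l = 1 := Iff.rfl

private lemma heis_sound (Λ : Subgroup G) (x : G) (ω : PontryaginDual G) (z : ℂ)
    (l : Λ) (τ : annih Λ) :
    Quot.mk (heisRel Λ) (x, ω, z) =
      Quot.mk (heisRel Λ) (x * l, ω * τ, (starRingEnd ℂ) ((ω (l : G) : ℂ)) * z) :=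
  Quot.sound ⟨l, τ, rfl, rfl, rfl⟩

private lemma heis_sound_tau (Λ : Subgroup G) (x : G) (ω : PontryaginDual G) (z : ℂ)
    (τ : annih Λ) :
    Quot.mk (heisRel Λ) (x, ω, z) = Quot.mk (heisRel Λ) (x, ω * τ, z) := by
  have := heis_sound Λ x ω z 1 τ
  simpa using this

private lemma heis_sound_l (Λ : Subgroup G) (x : G) (ω : PontryaginDual G) (z : ℂ)
    (l : Λ) :
    Quot.mk (heisRel Λ) (x, ω, z) =
      Quot.mk (heisRel Λ) (x * l, ω, (starRingEnd ℂ) ((ω (l : G) : ℂ)) * z) := by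
  have := heis_sound Λ x ω z l 1
  simpa using this

/-- Trivialization in the compact case, from any set-theoretic section of `Ĝ → Ĝ/Λ^⊥`. -/
private lemma compact_triv (Λ : Subgroup G) [DiscreteTopology (PontryaginDual G)]
    (s : PontryaginDual G ⧸ annih Λ → PontryaginDual G)
    (hs : ∀ c, QuotientGroup.mk (s c) = c) :
    ∃ t : Quot (heisRel Λ) → ((G ⧸ Λ) × (PontryaginDual G ⧸ annih Λ)) × ℂ,
      IsHomeomorph t ∧
      ∀ (x : G) (ω : PontryaginDual G) (z : ℂ),
        t (Quot.mk (heisRel Λ) (x, ω, z)) =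
          ((QuotientGroup.mk x, QuotientGroup.mk ω),
            ((s (QuotientGroup.mk ω)) x : ℂ) * z) := by
  -- the key coset fact
  have hsec : ∀ (ω : PontryaginDual G) (l : G), l ∈ Λ → (s (QuotientGroup.mk ω)) l = ω l := by
    intro ω l hl
    have hmem : ω⁻¹ * s (QuotientGroup.mk ω) ∈ annih Λ :=
      QuotientGroup.eq.mp (hs (QuotientGroup.mk ω)).symm
    have h1 : (ω⁻¹ * s (QuotientGroup.mk ω)) l = 1 := hmem l hl
    have h2 : (ω l)⁻¹ * (s (QuotientGroup.mk ω)) l = 1 := h1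
    exact (inv_mul_eq_one.mp h2).symm
  set f : G × PontryaginDual G × ℂ → ((G ⧸ Λ) × (PontryaginDual G ⧸ annih Λ)) × ℂ :=
    fun p => ((QuotientGroup.mk p.1, QuotientGroup.mk p.2.1),
      ((s (QuotientGroup.mk p.2.1)) p.1 : ℂ) * p.2.2) with hfdef
  have hwd : ∀ p q, heisRel Λ p q → f p = f q := by
    rintro ⟨x, ω, z⟩ ⟨x', ω', z'⟩ ⟨l, τ, h1, h2, h3⟩
    simp only at h1 h2 h3
    subst h1; subst h2; subst h3
    have hm1 : (QuotientGroup.mk (x * (l : G)) : G ⧸ Λ) = QuotientGroup.mk x :=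
      QuotientGroup.mk_mul_of_mem x l.2
    have hm2 : (QuotientGroup.mk (ω * (τ : PontryaginDual G)) : PontryaginDual G ⧸ annih Λ) =
        QuotientGroup.mk ω := QuotientGroup.mk_mul_of_mem ω τ.2
    simp only [hfdef, hm1, hm2]
    refine Prod.ext rfl ?_
    show ((s (QuotientGroup.mk ω)) x : ℂ) * z =
      ((s (QuotientGroup.mk ω)) (x * (l : G)) : ℂ) * ((starRingEnd ℂ) ((ω (l : G) : ℂ)) * z)
    rw [map_mul, hsec ω l l.2, coe_mul_conj_cancel']
  refine ⟨Quot.lift f hwd, ?_, fun x ω z => rfl⟩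
  rw [isHomeomorph_iff_exists_inverse]
  constructor
  · -- continuity of t
    apply continuous_quot_lift
    refine Continuous.prodMk (Continuous.prodMk ?_ ?_) ?_
    · exact continuous_quotient_mk'.comp continuous_fst
    · exact continuous_quotient_mk'.comp (continuous_fst.comp continuous_snd)
    · have hdc : Continuous fun ω : PontryaginDual G => s (QuotientGroup.mk ω) :=
        continuous_of_discreteTopology
      have hg : Continuous fun p : G × PontryaginDual G × ℂ => s (QuotientGroup.mk p.2.1) :=
        hdc.comp continuous_snd.fst
      exact continuous_discrete_param hg
        (fun κ => ((continuous_subtype_val.comp ((map_continuous κ).comp continuous_fst)).mul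
          continuous_snd.snd))
  · -- the inverse
    have hwdinv : ∀ (c2 : PontryaginDual G ⧸ annih Λ) (w : ℂ) (a b : G),
        QuotientGroup.leftRel Λ a b →
        Quot.mk (heisRel Λ) (a, s c2, ((((s c2) a)⁻¹ : Circle) : ℂ) * w) =
        Quot.mk (heisRel Λ) (b, s c2, ((((s c2) b)⁻¹ : Circle) : ℂ) * w) := by
      intro c2 w a b hab
      have hmem : a⁻¹ * b ∈ Λ := QuotientGroup.leftRel_apply.mp hab
      set l : Λ := ⟨a⁻¹ * b, hmem⟩ with hldef
      have h := heis_sound_l Λ a (s c2) (((((s c2) a)⁻¹ : Circle) : ℂ) * w) l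
      have h1 : a * (l : G) = b := by
        show a * (a⁻¹ * b) = b
        rw [mul_inv_cancel_left]
      have h2 : (starRingEnd ℂ) (((s c2) (l : G) : ℂ)) *
          (((((s c2) a)⁻¹ : Circle) : ℂ) * w) = ((((s c2) b)⁻¹ : Circle) : ℂ) * w := by
        have hb' : (s c2) b = (s c2) a * (s c2) (l : G) := by rw [← map_mul, h1]
        rw [hb', ← Circle.coe_inv_eq_conj, mul_inv, Circle.coe_mul, Circle.coe_inv,
          Circle.coe_inv]
        ring
      rw [h1, h2] at h
      exact h
    refine ⟨fun q => Quotient.liftOn' q.1.1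
      (fun x => Quot.mk (heisRel Λ) (x, s q.1.2, ((((s q.1.2) x)⁻¹ : Circle) : ℂ) * q.2))
      (fun a b hab => hwdinv q.1.2 q.2 a b hab), ?_, ?_, ?_⟩
    · -- left inverse
      intro e
      induction e using Quot.ind with
      | _ p =>
        obtain ⟨x, ω, z⟩ := p
        show Quot.mk (heisRel Λ) (x, s (QuotientGroup.mk ω),
            ((((s (QuotientGroup.mk ω)) x)⁻¹ : Circle) : ℂ) *
              (((s (QuotientGroup.mk ω)) x : ℂ) * z)) = Quot.mk (heisRel Λ) (x, ω, z)
        rw [coe_inv_mul_cancel']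
        have hmem : ω⁻¹ * s (QuotientGroup.mk ω) ∈ annih Λ :=
          QuotientGroup.eq.mp (hs (QuotientGroup.mk ω)).symm
        have h := heis_sound_tau Λ x ω z ⟨ω⁻¹ * s (QuotientGroup.mk ω), hmem⟩
        have hτ : ω * ((⟨ω⁻¹ * s (QuotientGroup.mk ω), hmem⟩ : annih Λ) : PontryaginDual G) =
            s (QuotientGroup.mk ω) := by
          show ω * (ω⁻¹ * s (QuotientGroup.mk ω)) = s (QuotientGroup.mk ω)
          rw [mul_inv_cancel_left]
        rw [hτ] at h
        exact h.symm
    · -- right inverse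
      rintro ⟨⟨c1, c2⟩, w⟩
      induction c1 using Quotient.inductionOn' with
      | h x =>
        show (Quot.lift f hwd) (Quot.mk (heisRel Λ)
            (x, s c2, ((((s c2) x)⁻¹ : Circle) : ℂ) * w)) = ((Quotient.mk'' x, c2), w)
        show ((QuotientGroup.mk x, QuotientGroup.mk (s c2)),
            ((s (QuotientGroup.mk (s c2))) x : ℂ) * (((((s c2) x)⁻¹ : Circle) : ℂ) * w)) =
          ((Quotient.mk'' x, c2), w)
        rw [hs c2, coe_mul_inv_cancel']
    · -- continuity of the inverse
      have hΦ : IsOpenQuotientMap (Prod.map (Prod.map (QuotientGroup.mk : G → G ⧸ Λ)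
          (QuotientGroup.mk : PontryaginDual G → PontryaginDual G ⧸ annih Λ)) (id : ℂ → ℂ)) :=
        (QuotientGroup.isOpenQuotientMap_mk.prodMap
          QuotientGroup.isOpenQuotientMap_mk).prodMap IsOpenQuotientMap.id
      rw [← hΦ.continuous_comp_iff]
      show Continuous fun p : (G × PontryaginDual G) × ℂ =>
        Quot.mk (heisRel Λ) (p.1.1, s (QuotientGroup.mk p.1.2),
          ((((s (QuotientGroup.mk p.1.2)) p.1.1)⁻¹ : Circle) : ℂ) * p.2)
      refine continuous_quot_mk.comp ?_
      have hdc : Continuous fun ω : PontryaginDual G => s (QuotientGroup.mk ω) :=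
        continuous_of_discreteTopology
      refine Continuous.prodMk continuous_fst.fst (Continuous.prodMk ?_ ?_)
      · exact hdc.comp continuous_fst.snd
      · have hg : Continuous fun p : (G × PontryaginDual G) × ℂ =>
            s (QuotientGroup.mk p.1.2) := hdc.comp continuous_fst.snd
        exact continuous_discrete_param hg (fun κ =>
          (continuous_subtype_val.comp (((map_continuous κ).comp
            continuous_fst.fst).inv)).mul continuous_snd)

/-- Trivialization in the discrete case, from any set-theoretic section of `G → G/Λ`. -/
private lemma discrete_triv (Λ : Subgroup G) [DiscreteTopology G]
    (s : G ⧸ Λ → G) (hs : ∀ c, QuotientGroup.mk (s c) = c) :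
    ∃ t : Quot (heisRel Λ) → ((G ⧸ Λ) × (PontryaginDual G ⧸ annih Λ)) × ℂ,
      IsHomeomorph t ∧
      ∀ (x : G) (ω : PontryaginDual G) (z : ℂ),
        t (Quot.mk (heisRel Λ) (x, ω, z)) =
          ((QuotientGroup.mk x, QuotientGroup.mk ω),
            ((ω (x * (s (QuotientGroup.mk x))⁻¹) : ℂ)) * z) := by
  haveI : ContinuousEvalConst (PontryaginDual G) G Circle :=
    ContinuousMonoidHom.instContinuousEvalConst G Circle
  have heval : ∀ a : G, Continuous fun ω : PontryaginDual G => ω a := fun a =>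
    continuous_eval_const a
  have hsecmem : ∀ x : G, x * (s (QuotientGroup.mk x))⁻¹ ∈ Λ := by
    intro x
    have : x⁻¹ * s (QuotientGroup.mk x) ∈ Λ := QuotientGroup.eq.mp (hs (QuotientGroup.mk x)).symm
    have h2 := Λ.inv_mem this
    rwa [mul_inv_rev, inv_inv, mul_comm] at h2
  set f : G × PontryaginDual G × ℂ → ((G ⧸ Λ) × (PontryaginDual G ⧸ annih Λ)) × ℂ :=
    fun p => ((QuotientGroup.mk p.1, QuotientGroup.mk p.2.1),
      ((p.2.1 (p.1 * (s (QuotientGroup.mk p.1))⁻¹) : ℂ)) * p.2.2) with hfdef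
  have hwd : ∀ p q, heisRel Λ p q → f p = f q := by
    rintro ⟨x, ω, z⟩ ⟨x', ω', z'⟩ ⟨l, τ, h1, h2, h3⟩
    simp only at h1 h2 h3
    subst h1; subst h2; subst h3
    have hm1 : (QuotientGroup.mk (x * (l : G)) : G ⧸ Λ) = QuotientGroup.mk x :=
      QuotientGroup.mk_mul_of_mem x l.2
    have hm2 : (QuotientGroup.mk (ω * (τ : PontryaginDual G)) : PontryaginDual G ⧸ annih Λ) =
        QuotientGroup.mk ω := QuotientGroup.mk_mul_of_mem ω τ.2
    simp only [hfdef, hm1, hm2]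
    refine Prod.ext rfl ?_
    show ((ω (x * (s (QuotientGroup.mk x))⁻¹) : ℂ)) * z =
      (((ω * (τ : PontryaginDual G)) (x * (l : G) * (s (QuotientGroup.mk x))⁻¹) : ℂ)) *
        ((starRingEnd ℂ) ((ω (l : G) : ℂ)) * z)
    set r := s (QuotientGroup.mk x) with hrdef
    have hτ : (τ : PontryaginDual G) (x * (l : G) * r⁻¹) = 1 := by
      have hxr : x * r⁻¹ ∈ Λ := hsecmem x
      have : x * (l : G) * r⁻¹ = (x * r⁻¹) * (l : G) := mul_right_comm x (l : G) r⁻¹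
      rw [this]
      have hτ1 : (τ : PontryaginDual G) ((x * r⁻¹) * (l : G)) =
          (τ : PontryaginDual G) (x * r⁻¹) * (τ : PontryaginDual G) (l : G) := map_mul _ _ _
      rw [hτ1, τ.2 _ hxr, τ.2 _ l.2, mul_one]
    have hmulapp : (ω * (τ : PontryaginDual G)) (x * (l : G) * r⁻¹) =
        ω (x * (l : G) * r⁻¹) * (τ : PontryaginDual G) (x * (l : G) * r⁻¹) := rfl
    rw [hmulapp, hτ, mul_one]
    have hωsplit : ω (x * (l : G) * r⁻¹) = ω (x * r⁻¹) * ω (l : G) := by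
      rw [← map_mul]
      congr 1
      exact mul_right_comm x (l : G) r⁻¹
    rw [hωsplit, coe_mul_conj_cancel']
  refine ⟨Quot.lift f hwd, ?_, fun x ω z => rfl⟩
  rw [isHomeomorph_iff_exists_inverse]
  constructor
  · apply continuous_quot_lift
    refine Continuous.prodMk (Continuous.prodMk ?_ ?_) ?_
    · exact continuous_quotient_mk'.comp continuous_fst
    · exact continuous_quotient_mk'.comp (continuous_fst.comp continuous_snd)
    · have hdc : Continuous fun x : G => x * (s (QuotientGroup.mk x))⁻¹ :=
        continuous_of_discreteTopology
      have hg : Continuous fun p : G × PontryaginDual G × ℂ =>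
          p.1 * (s (QuotientGroup.mk p.1))⁻¹ := hdc.comp continuous_fst
      exact continuous_discrete_param hg (fun a =>
        (continuous_subtype_val.comp ((heval a).comp continuous_snd.fst)).mul
          continuous_snd.snd)
  · have hwdinv : ∀ (c1 : G ⧸ Λ) (w : ℂ) (a b : PontryaginDual G),
        QuotientGroup.leftRel (annih Λ) a b →
        Quot.mk (heisRel Λ) (s c1, a, w) = Quot.mk (heisRel Λ) (s c1, b, w) := by
      intro c1 w a b hab
      have hmem : a⁻¹ * b ∈ annih Λ := QuotientGroup.leftRel_apply.mp hab
      have h := heis_sound_tau Λ (s c1) a w ⟨a⁻¹ * b, hmem⟩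
      have hτ : a * ((⟨a⁻¹ * b, hmem⟩ : annih Λ) : PontryaginDual G) = b := by
        show a * (a⁻¹ * b) = b
        rw [mul_inv_cancel_left]
      rw [hτ] at h
      exact h
    refine ⟨fun q => Quotient.liftOn' q.1.2
      (fun ω => Quot.mk (heisRel Λ) (s q.1.1, ω, q.2))
      (fun a b hab => hwdinv q.1.1 q.2 a b hab), ?_, ?_, ?_⟩
    · intro e
      induction e using Quot.ind with
      | _ p =>
        obtain ⟨x, ω, z⟩ := p
        show Quot.mk (heisRel Λ) (s (QuotientGroup.mk x), ω,
            ((ω (x * (s (QuotientGroup.mk x))⁻¹) : ℂ)) * z) = Quot.mk (heisRel Λ) (x, ω, z)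
        set r := s (QuotientGroup.mk x) with hrdef
        have hmem : x⁻¹ * r ∈ Λ := QuotientGroup.eq.mp (hs (QuotientGroup.mk x)).symm
        set l : Λ := ⟨x⁻¹ * r, hmem⟩ with hldef
        have h := heis_sound_l Λ x ω z l
        have h1 : x * (l : G) = r := by
          show x * (x⁻¹ * r) = r
          rw [mul_inv_cancel_left]
        have h2 : (starRingEnd ℂ) ((ω ((l : Λ) : G) : ℂ)) * z = ((ω (x * r⁻¹) : ℂ)) * z := by
          have harg : ((l : Λ) : G) = (x * r⁻¹)⁻¹ := by
            show x⁻¹ * r = (x * r⁻¹)⁻¹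
            rw [mul_inv_rev, inv_inv, mul_comm]
          rw [harg, map_inv, Circle.coe_inv_eq_conj, Complex.conj_conj]
        rw [h1, h2] at h
        exact h.symm
    · rintro ⟨⟨c1, c2⟩, w⟩
      induction c2 using Quotient.inductionOn' with
      | h ω =>
        show (Quot.lift f hwd) (Quot.mk (heisRel Λ) (s c1, ω, w)) = ((c1, Quotient.mk'' ω), w)
        show ((QuotientGroup.mk (s c1), QuotientGroup.mk ω),
            ((ω ((s c1) * (s (QuotientGroup.mk (s c1)))⁻¹) : ℂ)) * w) = ((c1, Quotient.mk'' ω), w)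
        rw [hs c1, mul_inv_cancel, map_one, Circle.coe_one, one_mul]
    · have hΦ : IsOpenQuotientMap (Prod.map (Prod.map (QuotientGroup.mk : G → G ⧸ Λ)
          (QuotientGroup.mk : PontryaginDual G → PontryaginDual G ⧸ annih Λ)) (id : ℂ → ℂ)) :=
        (QuotientGroup.isOpenQuotientMap_mk.prodMap
          QuotientGroup.isOpenQuotientMap_mk).prodMap IsOpenQuotientMap.id
      rw [← hΦ.continuous_comp_iff]
      show Continuous fun p : (G × PontryaginDual G) × ℂ =>
        Quot.mk (heisRel Λ) (s (QuotientGroup.mk p.1.1), p.1.2, p.2)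
      refine continuous_quot_mk.comp ?_
      have hdc : Continuous fun x : G => s (QuotientGroup.mk x) :=
        continuous_of_discreteTopology
      exact Continuous.prodMk (hdc.comp continuous_fst.fst)
        (Continuous.prodMk continuous_fst.snd continuous_snd)

end HeisHelpers

/-- If `G` is a second countable LCA group that is compact or discrete,
and `Λ` is any lattice in `G`, then the Heisenberg line bundle `E_{G,Λ}` over
`X = (G/Λ) × (Ĝ/Λ^⊥)` is trivial (there is a global fiberwise-linear homeomorphic
trivialization `t : E_{G,Λ} → X × ℂ` over `π`). In particular, when `G` is compact,
`[x, ω₀, z] ↦ ([x], ω₀(x)·z)` trivializes `E_{G,Λ}` over each component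
`(G/Λ) × {[ω₀]}`. -/
theorem heisenberg_bundle_trivial_of_compact_or_discrete
    {G : Type*} [CommGroup G] [TopologicalSpace G] [IsTopologicalGroup G]
    [LocallyCompactSpace G] [T2Space G] [SecondCountableTopology G]
    (Λ : Subgroup G) [DiscreteTopology Λ] [CompactSpace (G ⧸ Λ)]
    (hG : CompactSpace G ∨ DiscreteTopology G)
    (π : Quot (heisRel Λ) → (G ⧸ Λ) × (PontryaginDual G ⧸ annih Λ))
    (hπ : ∀ (x : G) (ω : PontryaginDual G) (z : ℂ),
      π (Quot.mk (heisRel Λ) (x, ω, z)) = (QuotientGroup.mk x, QuotientGroup.mk ω)) :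
    (∃ t : Quot (heisRel Λ) → ((G ⧸ Λ) × (PontryaginDual G ⧸ annih Λ)) × ℂ,
      IsHomeomorph t ∧
      (∀ e : Quot (heisRel Λ), (t e).1 = π e) ∧
      (∀ (x : G) (ω : PontryaginDual G) (z w : ℂ),
        (t (Quot.mk (heisRel Λ) (x, ω, z + w))).2 =
          (t (Quot.mk (heisRel Λ) (x, ω, z))).2 + (t (Quot.mk (heisRel Λ) (x, ω, w))).2) ∧
      (∀ (x : G) (ω : PontryaginDual G) (z c : ℂ),
        (t (Quot.mk (heisRel Λ) (x, ω, c * z))).2 =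
          c * (t (Quot.mk (heisRel Λ) (x, ω, z))).2)) ∧
    (CompactSpace G → ∀ ω₀ : PontryaginDual G,
      ∃ φt : Quot (heisRel Λ) → (G ⧸ Λ) × ℂ,
        (∀ (x : G) (z : ℂ),
          φt (Quot.mk (heisRel Λ) (x, ω₀, z)) = (QuotientGroup.mk x, ((ω₀ x : ℂ)) * z)) ∧
        ContinuousOn φt {e | (π e).2 = QuotientGroup.mk ω₀} ∧
        Set.BijOn φt {e | (π e).2 = QuotientGroup.mk ω₀} Set.univ) := by
  classical
  constructor
  · rcases hG with hC | hD
    · haveI := hC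
      haveI := discrete_dual G
      obtain ⟨t, ht, hform⟩ := compact_triv Λ (fun c => c.out)
        (fun c => QuotientGroup.out_eq' c)
      refine ⟨t, ht, ?_, ?_, ?_⟩
      · intro e
        induction e using Quot.ind with
        | _ p =>
          obtain ⟨x, ω, z⟩ := p
          rw [hform, hπ]
      · intro x ω z w
        simp only [hform]
        ring
      · intro x ω z c
        simp only [hform]
        ring
    · haveI := hD
      obtain ⟨t, ht, hform⟩ := discrete_triv Λ (fun c => c.out)
        (fun c => QuotientGroup.out_eq' c)
      refine ⟨t, ht, ?_, ?_, ?_⟩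
      · intro e
        induction e using Quot.ind with
        | _ p =>
          obtain ⟨x, ω, z⟩ := p
          rw [hform, hπ]
      · intro x ω z w
        simp only [hform]
        ring
      · intro x ω z c
        simp only [hform]
        ring
  · intro hC ω₀
    haveI := hC
    haveI := discrete_dual G
    set s : PontryaginDual G ⧸ annih Λ → PontryaginDual G :=
      fun c => if c = QuotientGroup.mk ω₀ then ω₀ else c.out with hsdef
    have hs : ∀ c, QuotientGroup.mk (s c) = c := by
      intro c
      by_cases h : c = QuotientGroup.mk ω₀
      · simp [hsdef, h]
      · simp [hsdef, h, QuotientGroup.out_eq']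
    have hs0 : s (QuotientGroup.mk ω₀) = ω₀ := by simp [hsdef]
    obtain ⟨t, ht, hform⟩ := compact_triv Λ s hs
    have hfst : ∀ e, (t e).1 = π e := by
      intro e
      induction e using Quot.ind with
      | _ p =>
        obtain ⟨x, ω, z⟩ := p
        rw [hform, hπ]
    refine ⟨fun e => ((t e).1.1, (t e).2), ?_, ?_, ?_⟩
    · intro x z
      show ((t (Quot.mk (heisRel Λ) (x, ω₀, z))).1.1, (t (Quot.mk (heisRel Λ) (x, ω₀, z))).2) =
        (QuotientGroup.mk x, ((ω₀ x : ℂ)) * z)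
      rw [hform, hs0]
    · exact (Continuous.prodMk (ht.continuous.fst.fst) (ht.continuous.snd)).continuousOn
    · refine ⟨fun e _ => trivial, ?_, ?_⟩
      · intro e he e' he' heq
        apply ht.bijective.1
        have h1 : (t e).1.2 = QuotientGroup.mk ω₀ := by rw [hfst]; exact he
        have h1' : (t e').1.2 = QuotientGroup.mk ω₀ := by rw [hfst]; exact he'
        have heq' : ((t e).1.1, (t e).2) = ((t e').1.1, (t e').2) := heq
        have heq1 := congrArg Prod.fst heq'
        have heq2 := congrArg Prod.snd heq'
        simp only [] at heq1 heq2
        exact Prod.ext (Prod.ext heq1 (h1.trans h1'.symm)) heq2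
      · rintro ⟨c1, w⟩ -
        induction c1 using Quotient.inductionOn' with
        | h x =>
          refine ⟨Quot.mk (heisRel Λ) (x, ω₀, (((ω₀ x)⁻¹ : Circle) : ℂ) * w), ?_, ?_⟩
          · show (π _).2 = QuotientGroup.mk ω₀
            rw [hπ]
          · show ((t (Quot.mk (heisRel Λ) (x, ω₀, (((ω₀ x)⁻¹ : Circle) : ℂ) * w))).1.1,
              (t (Quot.mk (heisRel Λ) (x, ω₀, (((ω₀ x)⁻¹ : Circle) : ℂ) * w))).2) =
              (Quotient.mk'' x, w)
            rw [hform, hs0, coe_mul_inv_cancel']
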